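/- In the randomize-first-sample-second design, the variance of the within-arm sample mean is Var[ȳ(T)] = ((N - n_T)/N)·(S_T²/n_T). -/

import Mathlib

set_option maxHeartbeats 1000000


open Finset

/-- Expectation under the uniform distribution on a finite sample space. -/
noncomputable def Ex {α : Type*} (Ω : Finset α) (f : α → ℝ) : ℝ :=
  (∑ ω ∈ Ω, f ω) / (Ω.card : ℝ)

/-- Randomize-first-sample-second, one arm: pairs `(A, B)` with `A` the
size-`N₁` treatment group and `B ⊆ A` the size-`n₁` sample, chosen uniformly. -/
def design2arm (N N1 n1 : ℕ) : Finset (Finset (Fin N) × Finset (Fin N)) :=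
  Finset.univ.filter (fun p => p.1.card = N1 ∧ p.2 ⊆ p.1 ∧ p.2.card = n1)

section aux

variable {α : Type*} [DecidableEq α]

lemma count_supersets (s t : Finset α) (hts : t ⊆ s) {k : ℕ} (hk : t.card ≤ k) :
    ((powersetCard k s).filter (fun B => t ⊆ B)).card
      = (s.card - t.card).choose (k - t.card) := by
  have h2 : (s.card - t.card).choose (k - t.card) = ((s \ t).powersetCard (k - t.card)).card := by
    rw [card_powersetCard, card_sdiff_of_subset hts]
  rw [h2]
  apply Finset.card_nbij' (fun B => B \ t) (fun C => C ∪ t)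
  · intro B hB
    rw [mem_coe, mem_filter, mem_powersetCard] at hB
    obtain ⟨⟨hBs, hBk⟩, htB⟩ := hB
    rw [mem_coe, mem_powersetCard]
    exact ⟨sdiff_subset_sdiff hBs (le_refl t), by rw [card_sdiff_of_subset htB, hBk]⟩
  · intro C hC
    rw [mem_coe, mem_powersetCard] at hC
    obtain ⟨hCs, hCk⟩ := hC
    have hdisj : Disjoint C t := Finset.sdiff_disjoint.mono_left hCs
    rw [mem_coe, mem_filter, mem_powersetCard]
    refine ⟨⟨union_subset (hCs.trans sdiff_subset) hts, ?_⟩, subset_union_right⟩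
    rw [card_union_of_disjoint hdisj, hCk, Nat.sub_add_cancel hk]
  · intro B hB
    rw [mem_coe, mem_filter] at hB
    exact sdiff_union_of_subset hB.2
  · intro C hC
    rw [mem_coe, mem_powersetCard] at hC
    exact union_sdiff_cancel_right (Finset.sdiff_disjoint.mono_left hC.1)

lemma count_supersets_empty (s t : Finset α) {k : ℕ} (hk : k < t.card) :
    ((powersetCard k s).filter (fun B => t ⊆ B)).card = 0 := by
  rw [Finset.card_eq_zero, Finset.filter_eq_empty_iff]
  intro B hB htB
  rw [mem_powersetCard] at hB
  exact absurd (card_le_card htB) (by omega)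

end aux

lemma sum_design (N N1 n1 : ℕ) (hn1' : n1 ≤ N1) (g : Finset (Fin N) → ℝ) :
    ∑ p ∈ design2arm N N1 n1, g p.2
      = ((N - n1).choose (N1 - n1) : ℝ)
          * ∑ B ∈ powersetCard n1 (univ : Finset (Fin N)), g B := by
  have h1 : ∑ p ∈ design2arm N N1 n1, g p.2
      = ∑ A ∈ powersetCard N1 (univ : Finset (Fin N)), ∑ B ∈ powersetCard n1 A, g B := by
    apply Finset.sum_finset_product' _ _ _ (f := fun _ B => g B)
    intro p
    simp only [design2arm, mem_filter, mem_univ, true_and, mem_powersetCard, subset_univ]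
  have h2 : ∑ A ∈ powersetCard N1 (univ : Finset (Fin N)), ∑ B ∈ powersetCard n1 A, g B
      = ∑ B ∈ powersetCard n1 (univ : Finset (Fin N)),
          ∑ _A ∈ (powersetCard N1 (univ : Finset (Fin N))).filter (fun A => B ⊆ A), g B := by
    apply Finset.sum_comm'
    intro A B
    simp only [mem_powersetCard, subset_univ, true_and, mem_filter]
    tauto
  rw [h1, h2, Finset.mul_sum]
  apply Finset.sum_congr rfl
  intro B hB
  rw [mem_powersetCard] at hB
  have hcard : ((powersetCard N1 (univ : Finset (Fin N))).filter (fun A => B ⊆ A)).card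
      = (N - n1).choose (N1 - n1) := by
    have h := count_supersets (univ : Finset (Fin N)) B (subset_univ B) (k := N1)
      (by rw [hB.2]; exact hn1')
    rwa [card_univ, Fintype.card_fin, hB.2] at h
  rw [Finset.sum_const, hcard, nsmul_eq_mul]

/-- Var[ȳ(1)] = ((N - n₁)/N)·S₁²/n₁. -/
theorem design2_sample_mean_variance (N N1 n1 : ℕ) (hN : 2 ≤ N)
    (hN1 : N1 ≤ N) (hn1 : 1 ≤ n1) (hn1' : n1 ≤ N1)
    (Y : Fin N → ℝ) (Ybar S1sq : ℝ)
    (hYbar : Ybar = (∑ i, Y i) / (N : ℝ))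
    (hS1 : S1sq = (∑ i, (Y i - Ybar) ^ 2) / ((N : ℝ) - 1)) :
    Ex (design2arm N N1 n1) (fun p => ((∑ i ∈ p.2, Y i) / (n1 : ℝ)) ^ 2)
      - (Ex (design2arm N N1 n1) (fun p => (∑ i ∈ p.2, Y i) / (n1 : ℝ))) ^ 2
      = (((N : ℝ) - (n1 : ℝ)) / (N : ℝ)) * (S1sq / (n1 : ℝ)) := by
  classical
  set W : Finset (Finset (Fin N)) := powersetCard n1 (univ : Finset (Fin N)) with hWdef
  set m : ℕ := (N - n1).choose (N1 - n1) with hmdef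
  have hm : 0 < m := Nat.choose_pos (Nat.sub_le_sub_right hN1 n1)
  have hWcard : W.card = N.choose n1 := by
    rw [hWdef, card_powersetCard, card_univ, Fintype.card_fin]
  have hc : 0 < N.choose n1 := Nat.choose_pos (hn1'.trans hN1)
  -- cardinality of the design
  have hDcard : ((design2arm N N1 n1).card : ℝ) = (m : ℝ) * (W.card : ℝ) := by
    have := sum_design N N1 n1 hn1' (fun _ => (1 : ℝ))
    simpa [hmdef, hWcard, hWdef, Finset.sum_const] using this
  -- expectation reduction
  have hEx : ∀ g : Finset (Fin N) → ℝ,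
      Ex (design2arm N N1 n1) (fun p => g p.2) = Ex W g := by
    intro g
    unfold Ex
    rw [sum_design N N1 n1 hn1' g, hDcard, mul_div_mul_left]
    positivity
  rw [hEx (fun B => ((∑ i ∈ B, Y i) / (n1 : ℝ)) ^ 2),
      hEx (fun B => (∑ i ∈ B, Y i) / (n1 : ℝ))]
  -- centered variables
  set Z : Fin N → ℝ := fun i => Y i - Ybar with hZdef
  have hNR : (N : ℝ) ≠ 0 := by positivity
  have hSZ : ∑ i, Z i = 0 := by
    simp only [hZdef, Finset.sum_sub_distrib, Finset.sum_const, card_univ, Fintype.card_fin,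
      nsmul_eq_mul, hYbar]
    field_simp
    ring
  set Q : ℝ := ∑ i, Z i ^ 2 with hQdef
  set c1 : ℕ := (N - 1).choose (n1 - 1) with hc1def
  set c2 : ℕ := if 2 ≤ n1 then (N - 2).choose (n1 - 2) else 0 with hc2def
  -- counting lemmas
  have hcnt1 : ∀ i : Fin N, (W.filter (fun B => i ∈ B)).card = c1 := by
    intro i
    have : (W.filter (fun B => i ∈ B)) = W.filter (fun B => {i} ⊆ B) := by
      simp [singleton_subset_iff]
    rw [this, hWdef, count_supersets _ _ (subset_univ _) (by simpa using hn1),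
      card_univ, Fintype.card_fin, card_singleton]
  have hcnt2 : ∀ i j : Fin N, i ≠ j →
      (W.filter (fun B => i ∈ B ∧ j ∈ B)).card = c2 := by
    intro i j hij
    have hpair : ({i, j} : Finset (Fin N)).card = 2 := card_pair hij
    have hiff : (W.filter (fun B => i ∈ B ∧ j ∈ B))
        = W.filter (fun B => ({i, j} : Finset (Fin N)) ⊆ B) := by
      simp [insert_subset_iff]
    rw [hiff, hc2def]
    by_cases h2 : 2 ≤ n1
    · rw [if_pos h2, hWdef, count_supersets _ _ (subset_univ _) (by rw [hpair]; exact h2),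
        card_univ, Fintype.card_fin, hpair]
    · rw [if_neg h2, hWdef, count_supersets_empty _ _ (by omega)]
  -- first moment of centered sample sum
  have hM1 : ∑ B ∈ W, (∑ i ∈ B, Z i) = 0 := by
    have : ∀ B ∈ W, (∑ i ∈ B, Z i) = ∑ i, (if i ∈ B then Z i else 0) := by
      intro B _
      rw [Finset.sum_ite_mem, univ_inter]
    rw [Finset.sum_congr rfl this, Finset.sum_comm]
    have : ∀ i : Fin N, (∑ B ∈ W, if i ∈ B then Z i else 0) = (c1 : ℝ) * Z i := by
      intro i
      rw [← Finset.sum_filter, Finset.sum_const, hcnt1 i, nsmul_eq_mul]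
    rw [Finset.sum_congr rfl (fun i _ => this i), ← Finset.mul_sum, hSZ, mul_zero]
  -- second moment of centered sample sum
  have hM2 : ∑ B ∈ W, (∑ i ∈ B, Z i) ^ 2 = ((c1 : ℝ) - (c2 : ℝ)) * Q := by
    have step1 : ∀ B ∈ W, (∑ i ∈ B, Z i) ^ 2
        = ∑ i, ∑ j, (if i ∈ B ∧ j ∈ B then Z i * Z j else 0) := by
      intro B _
      rw [sq, Finset.sum_mul_sum]
      symm
      have h1 : ∀ i : Fin N, (∑ j, if i ∈ B ∧ j ∈ B then Z i * Z j else 0)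
          = if i ∈ B then ∑ j ∈ B, Z i * Z j else 0 := by
        intro i
        by_cases hi : i ∈ B
        · simp only [hi, true_and, if_true]
          rw [Finset.sum_ite_mem, univ_inter]
        · simp [hi]
      rw [Finset.sum_congr rfl fun i _ => h1 i, Finset.sum_ite_mem, univ_inter]
    rw [Finset.sum_congr rfl step1, Finset.sum_comm]
    have step2 : ∀ i : Fin N,
        (∑ B ∈ W, ∑ j, (if i ∈ B ∧ j ∈ B then Z i * Z j else 0))
          = ∑ j, (((W.filter (fun B => i ∈ B ∧ j ∈ B)).card : ℝ)) * (Z i * Z j) := by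
      intro i
      rw [Finset.sum_comm]
      apply Finset.sum_congr rfl
      intro j _
      rw [← Finset.sum_filter, Finset.sum_const, nsmul_eq_mul]
    rw [Finset.sum_congr rfl (fun i _ => step2 i)]
    have step3 : ∀ i : Fin N, ∀ j : Fin N,
        (((W.filter (fun B => i ∈ B ∧ j ∈ B)).card : ℝ)) * (Z i * Z j)
          = (c2 : ℝ) * (Z i * Z j)
            + (if j = i then ((c1 : ℝ) - (c2 : ℝ)) * Z i ^ 2 else 0) := by
      intro i j
      by_cases hij : j = i
      · subst hij
        have : (W.filter (fun B => j ∈ B ∧ j ∈ B)) = W.filter (fun B => j ∈ B) := by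
          simp
        rw [this, hcnt1 j, if_pos rfl]
        ring
      · rw [hcnt2 i j (fun h => hij h.symm), if_neg hij]
        ring
    have step4 : ∀ i : Fin N,
        (∑ j, (((W.filter (fun B => i ∈ B ∧ j ∈ B)).card : ℝ)) * (Z i * Z j))
          = (c2 : ℝ) * Z i * (∑ j, Z j) + ((c1 : ℝ) - (c2 : ℝ)) * Z i ^ 2 := by
      intro i
      rw [Finset.sum_congr rfl (fun j _ => step3 i j), Finset.sum_add_distrib,
        Finset.sum_ite_eq' univ i (fun _ => ((c1 : ℝ) - (c2 : ℝ)) * Z i ^ 2), if_pos (mem_univ i)]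
      congr 1
      rw [Finset.mul_sum]
      apply Finset.sum_congr rfl
      intro j _
      ring
    rw [Finset.sum_congr rfl (fun i _ => step4 i), hSZ]
    simp only [mul_zero, zero_add]
    rw [← Finset.mul_sum, hQdef]
  -- rewrite Y-sums in terms of Z-sums
  have hYZ : ∀ B ∈ W, (∑ i ∈ B, Y i) / (n1 : ℝ) = (∑ i ∈ B, Z i) / (n1 : ℝ) + Ybar := by
    intro B hB
    rw [hWdef, mem_powersetCard] at hB
    have : ∑ i ∈ B, Y i = ∑ i ∈ B, Z i + (n1 : ℝ) * Ybar := by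
      simp only [hZdef, Finset.sum_sub_distrib, Finset.sum_const, hB.2, nsmul_eq_mul]
      ring
    rw [this]
    field_simp
  have hn1R : (n1 : ℝ) ≠ 0 := by positivity
  have hcR : ((W.card : ℝ)) ≠ 0 := by rw [hWcard]; positivity
  -- compute the two expectations
  have hExp1 : Ex W (fun B => ((∑ i ∈ B, Y i) / (n1 : ℝ)) ^ 2)
      = ((c1 : ℝ) - (c2 : ℝ)) * Q / ((W.card : ℝ) * (n1 : ℝ) ^ 2) + Ybar ^ 2 := by
    unfold Ex
    have : ∀ B ∈ W, ((∑ i ∈ B, Y i) / (n1 : ℝ)) ^ 2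
        = (∑ i ∈ B, Z i) ^ 2 / (n1 : ℝ) ^ 2 + 2 * Ybar / (n1 : ℝ) * (∑ i ∈ B, Z i)
          + Ybar ^ 2 := by
      intro B hB
      rw [hYZ B hB]
      field_simp
      ring
    rw [Finset.sum_congr rfl this]
    rw [Finset.sum_add_distrib, Finset.sum_add_distrib, ← Finset.sum_div, hM2,
      ← Finset.mul_sum, hM1, mul_zero, add_zero, Finset.sum_const, nsmul_eq_mul]
    field_simp
  have hExp2 : Ex W (fun B => (∑ i ∈ B, Y i) / (n1 : ℝ)) = Ybar := by
    unfold Ex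
    rw [Finset.sum_congr rfl hYZ, Finset.sum_add_distrib, ← Finset.sum_div, hM1,
      Finset.sum_const, nsmul_eq_mul]
    field_simp
    ring
  have hNat1 : (c1 : ℝ) * (N : ℝ) = (N.choose n1 : ℝ) * (n1 : ℝ) := by
    have h := Nat.add_one_mul_choose_eq (N - 1) (n1 - 1)
    have hN' : N - 1 + 1 = N := by omega
    have hn' : n1 - 1 + 1 = n1 := by omega
    rw [hN', hn'] at h
    have h' : c1 * N = N.choose n1 * n1 := by rw [hc1def, Nat.mul_comm]; exact h
    exact_mod_cast congrArg (Nat.cast : ℕ → ℝ) h'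
  have hNat2 : (c2 : ℝ) * ((N : ℝ) - 1) = (c1 : ℝ) * ((n1 : ℝ) - 1) := by
    by_cases h2 : 2 ≤ n1
    · have h := Nat.add_one_mul_choose_eq (N - 2) (n1 - 2)
      have hN' : N - 2 + 1 = N - 1 := by omega
      have hn' : n1 - 2 + 1 = n1 - 1 := by omega
      rw [hN', hn'] at h
      have hcast : ((N - 1 : ℕ) : ℝ) = (N : ℝ) - 1 := by
        rw [Nat.cast_sub (by omega)]; norm_num
      have hcast2 : ((n1 - 1 : ℕ) : ℝ) = (n1 : ℝ) - 1 := by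
        rw [Nat.cast_sub (by omega)]; norm_num
      have hR : ((N - 1 : ℕ) : ℝ) * (c2 : ℝ) = (c1 : ℝ) * ((n1 - 1 : ℕ) : ℝ) := by
        rw [hc2def, if_pos h2, hc1def]
        exact_mod_cast congrArg (Nat.cast : ℕ → ℝ) h
      rw [hcast, hcast2] at hR
      linarith [hR]
    · have hn1eq : n1 = 1 := by omega
      rw [hc2def, if_neg h2, hn1eq]
      norm_num
  have hNR1 : (N : ℝ) - 1 ≠ 0 := by
    have : (2 : ℝ) ≤ (N : ℝ) := by exact_mod_cast hN
    linarith
  have hchR : ((N.choose n1 : ℕ) : ℝ) ≠ 0 := by positivity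
  have key : ((c1 : ℝ) - (c2 : ℝ)) * ((N : ℝ) * ((N : ℝ) - 1))
      = ((N.choose n1 : ℕ) : ℝ) * (n1 : ℝ) * ((N : ℝ) - (n1 : ℝ)) := by
    linear_combination ((N : ℝ) - 1) * hNat1 - (N : ℝ) * hNat2 - ((n1 : ℝ) - 1) * hNat1
  rw [hExp1, hExp2, hS1, hWcard, add_sub_cancel_right]
  field_simp
  linear_combination (Q : ℝ) * key
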